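/- For every a > 0 and every u > 0, P( Σ_{i,j=1}^g G_{ij} t_i t_j < a and Σ_{i ≥ 1} λ_i t_i² > u ) ≤ C₂(a) · exp( −(1/λ⁺ + 1/λ′) u / 4 ), where C₂(a) = exp( (1 + λ⁺/λ′) a / (4 μ̃) ) · Π_{i > g} (1 − (1/λ⁺ + 1/λ′) λ_i / 2)^{−1/2}, and this infinite product converges. -/

import Mathlib

open MeasureTheory ProbabilityTheory Real Filter
open scoped ENNReal NNReal

lemma aux_gauss {c : ℝ} (hc : c < 1/2) :
    ∫⁻ x, ENNReal.ofReal (Real.exp (c * x ^ 2)) ∂(gaussianReal 0 1)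
      = ENNReal.ofReal ((1 - 2*c) ^ (-(1/2) : ℝ)) := by
  have hb : (0:ℝ) < 1/2 - c := by linarith
  have hmeas : Measurable fun x : ℝ => ENNReal.ofReal (Real.exp (c * x ^ 2)) :=
    ENNReal.measurable_ofReal.comp (Real.measurable_exp.comp ((measurable_id.pow_const 2).const_mul c))
  rw [gaussianReal_of_var_ne_zero 0 one_ne_zero,
    lintegral_withDensity_eq_lintegral_mul _ (measurable_gaussianPDF 0 1) hmeas]
  have heq : ∀ x : ℝ, (gaussianPDF 0 1 * fun x => ENNReal.ofReal (Real.exp (c * x ^ 2))) x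
      = ENNReal.ofReal ((Real.sqrt (2*Real.pi))⁻¹ * Real.exp (-(1/2 - c) * x ^ 2)) := by
    intro x
    simp only [Pi.mul_apply, gaussianPDF, ← ENNReal.ofReal_mul (gaussianPDFReal_nonneg 0 1 x)]
    congr 1
    have harg : -x^2/2 + c*x^2 = -(1/2 - c) * x^2 := by ring
    rw [gaussianPDFReal]
    push_cast
    simp only [mul_one, sub_zero]
    rw [mul_assoc, ← Real.exp_add, harg]
  simp_rw [heq]
  rw [← ofReal_integral_eq_lintegral_ofReal
      ((integrable_exp_neg_mul_sq hb).const_mul _)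
      (ae_of_all _ fun x => by positivity)]
  rw [integral_const_mul, integral_gaussian]
  congr 1
  have hπ : 0 < Real.pi := Real.pi_pos
  have h2 : Real.sqrt (2*Real.pi) = Real.sqrt 2 * Real.sqrt Real.pi := Real.sqrt_mul (by norm_num) _
  have h3 : Real.sqrt (Real.pi/(1/2 - c)) = Real.sqrt Real.pi / Real.sqrt (1/2 - c) :=
    Real.sqrt_div hπ.le _
  have h5 : (1 - 2*c : ℝ) ^ (-(1/2) : ℝ) = (Real.sqrt (1 - 2*c))⁻¹ := by
    rw [Real.rpow_neg (by linarith), Real.sqrt_eq_rpow]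
  have h4 : (1 - 2*c : ℝ) = 2*(1/2 - c) := by ring
  rw [h5, h2, h3, h4, Real.sqrt_mul (by norm_num)]
  have hp : Real.sqrt Real.pi > 0 := Real.sqrt_pos.2 hπ
  have h2p : Real.sqrt 2 > 0 := by positivity
  have hcp : Real.sqrt (1/2 - c) > 0 := Real.sqrt_pos.2 hb
  field_simp

lemma abs_log_one_sub_le {x δ : ℝ} (hδ : 0 < δ) (hx : x ≤ 1 - δ) :
    |Real.log (1 - x)| ≤ (1 + δ⁻¹) * |x| := by
  have h1 : 0 < 1 - x := by linarith
  have hδi : 0 < δ⁻¹ := inv_pos.2 hδ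
  rw [abs_le]
  constructor
  · have h0 := Real.log_le_sub_one_of_pos (inv_pos.2 h1)
    rw [Real.log_inv] at h0
    -- h0 : -log (1-x) ≤ (1-x)⁻¹ - 1
    have hkey : (1-x)⁻¹ - 1 = x * (1-x)⁻¹ := by field_simp; ring
    have hbound : x * (1-x)⁻¹ ≤ (1 + δ⁻¹) * |x| := by
      rcases le_or_gt 0 x with hx0 | hx0
      · have hinv : (1-x)⁻¹ ≤ δ⁻¹ := by
          apply inv_anti₀ hδ; linarith
        have : x * (1-x)⁻¹ ≤ x * δ⁻¹ := mul_le_mul_of_nonneg_left hinv hx0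
        rw [abs_of_nonneg hx0]
        nlinarith
      · have : x * (1-x)⁻¹ ≤ 0 :=
          mul_nonpos_of_nonpos_of_nonneg hx0.le (inv_pos.2 h1).le
        have := abs_nonneg x
        nlinarith
    linarith
  · have h0 := Real.log_le_sub_one_of_pos h1
    have h2 := neg_abs_le x
    have h3 := mul_nonneg hδi.le (abs_nonneg x)
    nlinarith

/-- Let `(t i)_{i ∈ ℕ}` be i.i.d. standard real Gaussian random variables, `g ≥ 1`, `G` a
real symmetric positive-definite `g×g` matrix with smallest eigenvalue `μ̃ > 0` (so that
`μ̃ Σ x_i² ≤ Σ_{ij} G_{ij} x_i x_j`), and `(λ i)` absolutely summable reals whose first `g`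
values equal `λ⁺ > 0` and whose remaining values are `≤ λ′`, where `0 < λ′ < λ⁺`.
Then the infinite product `Π_{i > g} (1 − (1/λ⁺ + 1/λ′) λ_i / 2)^(−1/2)` converges, and
for every `a > 0` and `u > 0`,
`P(Σ_{i,j<g} G_{ij} t_i t_j < a ∧ Σ_i λ_i t_i² > u) ≤ C₂(a) exp(−(1/λ⁺ + 1/λ′) u/4)`,
where `C₂(a) = exp((1 + λ⁺/λ′) a/(4μ̃)) Π_{i > g} (1 − (1/λ⁺ + 1/λ′) λ_i / 2)^(−1/2)`. -/
theorem stmt_11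
    {Ω : Type*} [MeasurableSpace Ω] (P : Measure Ω) [IsProbabilityMeasure P]
    (t : ℕ → Ω → ℝ) (htmeas : ∀ i, Measurable (t i))
    (htlaw : ∀ i, P.map (t i) = gaussianReal 0 1)
    (htindep : iIndepFun t P)
    (g : ℕ) (hg : 1 ≤ g)
    (G : Matrix (Fin g) (Fin g) ℝ) (hGsym : G.IsSymm) (hGpd : G.PosDef)
    (μt : ℝ) (hμt : 0 < μt)
    (hμmin : ∀ x : Fin g → ℝ,
      μt * ∑ i, x i ^ 2 ≤ ∑ i, ∑ j, G i j * x i * x j)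
    (lam : ℕ → ℝ) (hlamsum : Summable fun i => |lam i|)
    (lamp lam' : ℝ) (hlam'pos : 0 < lam') (hlt : lam' < lamp)
    (hfirst : ∀ i < g, lam i = lamp)
    (hrest : ∀ i, g ≤ i → lam i ≤ lam') :
    Multipliable (fun i : ℕ =>
      (1 - (1 / lamp + 1 / lam') * lam (i + g) / 2) ^ (-(1 / 2) : ℝ)) ∧
    ∀ a > (0 : ℝ), ∀ u > (0 : ℝ),
      P {ω | (∑ i : Fin g, ∑ j : Fin g, G i j * t i.1 ω * t j.1 ω) < a ∧
              u < ∑' i, lam i * t i ω ^ 2}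
        ≤ ENNReal.ofReal
            ((Real.exp ((1 + lamp / lam') * a / (4 * μt)) *
              ∏' i : ℕ, (1 - (1 / lamp + 1 / lam') * lam (i + g) / 2) ^ (-(1 / 2) : ℝ)) *
             Real.exp (-(1 / lamp + 1 / lam') * u / 4)) := by
  set θ' : ℝ := 1 / lamp + 1 / lam' with hθ'
  have hlamppos : 0 < lamp := hlam'pos.trans hlt
  set θ : ℝ := θ' / 4 with hθ
  clear_value θ' θ
  have hθ'pos : 0 < θ' := by rw [hθ']; positivity
  have hθpos : 0 < θ := by rw [hθ, hθ']; positivity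
  have hlam'e : θ' * lam' = lam' / lamp + 1 := by
    rw [hθ']; field_simp
  have hll : lam' / lamp < 1 := (div_lt_one hlamppos).2 hlt
  have hcb : ∀ j, g ≤ j → θ * lam j < 1/2 := by
    intro j hj
    have h1 : θ * lam j ≤ θ * lam' := mul_le_mul_of_nonneg_left (hrest j hj) hθpos.le
    have h2 : θ * lam' < 1/2 := by
      have : θ * lam' = (lam' / lamp + 1) / 4 := by rw [hθ, div_mul_eq_mul_div, hlam'e]
      rw [this]; linarith
    linarith
  -- positivity and bounds for tail factors
  set δ : ℝ := 1 - θ' * lam' / 2 with hδdef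
  clear_value δ
  have hδpos : 0 < δ := by rw [hδdef, hlam'e]; linarith
  have hxle : ∀ i : ℕ, θ' * lam (i + g) / 2 ≤ 1 - δ := by
    intro i
    have := mul_le_mul_of_nonneg_left (hrest (i + g) (by omega)) hθ'pos.le
    rw [hδdef]; linarith
  have hrpos : ∀ i : ℕ, 0 < 1 - θ' * lam (i + g) / 2 := fun i => by
    have := hxle i; linarith
  -- summability of logs, HasProd
  have hsum_tail : Summable fun i => |lam (i + g)| := (summable_nat_add_iff (f := fun i => |lam i|) g).2 hlamsum
  have hlog_sum : Summable fun i : ℕ => Real.log (1 - θ' * lam (i + g) / 2) := by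
    apply Summable.of_abs
    apply Summable.of_nonneg_of_le (fun i => abs_nonneg _) (fun i => ?_)
      (hsum_tail.mul_left ((1 + δ⁻¹) * (θ' / 2)))
    calc |Real.log (1 - θ' * lam (i + g) / 2)|
        ≤ (1 + δ⁻¹) * |θ' * lam (i + g) / 2| := abs_log_one_sub_le hδpos (hxle i)
      _ = (1 + δ⁻¹) * (θ' / 2) * |lam (i + g)| := by
          rw [abs_div, abs_mul, abs_of_pos hθ'pos, abs_of_pos (by norm_num : (0:ℝ) < 2)]
          ring
  set L : ℝ := Real.exp (∑' i : ℕ, (-(1/2) : ℝ) * Real.log (1 - θ' * lam (i + g) / 2)) with hLdef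
  have hHasProd : HasProd (fun i : ℕ => (1 - θ' * lam (i + g) / 2) ^ (-(1/2) : ℝ)) L := by
    have h1 : HasSum (fun i : ℕ => (-(1/2) : ℝ) * Real.log (1 - θ' * lam (i + g) / 2))
        (∑' i : ℕ, (-(1/2) : ℝ) * Real.log (1 - θ' * lam (i + g) / 2)) :=
      (hlog_sum.mul_left _).hasSum
    have h2 := h1.rexp
    have h3 : (fun i : ℕ => (1 - θ' * lam (i + g) / 2) ^ (-(1/2) : ℝ))
        = fun i : ℕ => Real.exp ((-(1/2) : ℝ) * Real.log (1 - θ' * lam (i + g) / 2)) := by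
      funext i
      rw [Real.rpow_def_of_pos (hrpos i), mul_comm]
    rw [hLdef, h3]
    exact h2
  refine ⟨hHasProd.multipliable, ?_⟩
  intro a ha u hu
  rw [hHasProd.tprod_eq]
  -- the random factors
  set H : ℕ → Ω → ℝ≥0∞ := fun j ω => ENNReal.ofReal (Real.exp (θ * lam j * t j ω ^ 2)) with hHdef
  have hHmeas : ∀ j, Measurable (H j) := fun j =>
    ENNReal.measurable_ofReal.comp (Real.measurable_exp.comp (((htmeas j).pow_const 2).const_mul _))
  have hHindep : iIndepFun H P :=
    htindep.comp (fun j x => ENNReal.ofReal (Real.exp (θ * lam j * x ^ 2)))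
      (fun j => ENNReal.measurable_ofReal.comp
        (Real.measurable_exp.comp ((measurable_id.pow_const 2).const_mul _)))
  have hI : ∀ j, g ≤ j →
      ∫⁻ ω, H j ω ∂P = ENNReal.ofReal ((1 - θ' * lam j / 2) ^ (-(1/2) : ℝ)) := by
    intro j hj
    have hm : Measurable fun x : ℝ => ENNReal.ofReal (Real.exp (θ * lam j * x ^ 2)) :=
      ENNReal.measurable_ofReal.comp
        (Real.measurable_exp.comp ((measurable_id.pow_const 2).const_mul _))
    have : ∫⁻ ω, H j ω ∂P
        = ∫⁻ x, ENNReal.ofReal (Real.exp (θ * lam j * x ^ 2)) ∂(P.map (t j)) :=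
      (lintegral_map hm (htmeas j)).symm
    rw [this, htlaw j, aux_gauss (hcb j hj)]
    congr 2
    rw [hθ]; ring
  -- integral of partial products
  have hprod_int : ∀ n, ∫⁻ ω, ∏ i ∈ Finset.range n, H (i + g) ω ∂P
      = ∏ i ∈ Finset.range n, ENNReal.ofReal ((1 - θ' * lam (i + g) / 2) ^ (-(1/2) : ℝ)) := by
    intro n
    induction n with
    | zero => simp
    | succ n ih =>
      have himage : (fun ω => ∏ i ∈ Finset.range n, H (i + g) ω)
          = (∏ j ∈ (Finset.range n).image (· + g), H j) := by
        funext ω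
        rw [Finset.prod_apply, Finset.prod_image (fun x _ y _ h => by omega)]
      have hnotmem : n + g ∉ (Finset.range n).image (· + g) := by
        simp only [Finset.mem_image, Finset.mem_range]
        rintro ⟨x, hx, hxe⟩; omega
      have hindep : IndepFun (fun ω => ∏ i ∈ Finset.range n, H (i + g) ω) (H (n + g)) P := by
        rw [himage]; exact hHindep.indepFun_finsetProd_of_notMem hHmeas hnotmem
      have hpm : Measurable fun ω => ∏ i ∈ Finset.range n, H (i + g) ω :=
        Finset.measurable_prod _ (fun i _ => hHmeas _)
      simp_rw [Finset.prod_range_succ]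
      rw [lintegral_mul_eq_lintegral_mul_lintegral_of_indepFun'' hpm.aemeasurable
        (hHmeas _).aemeasurable hindep, ih, hI (n + g) (by omega)]
  set A' : ℝ := (1 + lamp / lam') * a / (4 * μt) with hA'
  clear_value A'
  set K : ℝ≥0∞ := ENNReal.ofReal (Real.exp A' * Real.exp (-θ' * u / 4)) with hK
  have hKne : K ≠ ⊤ := by rw [hK]; exact ENNReal.ofReal_ne_top
  clear_value K
  set f : Ω → ℝ≥0∞ :=
    fun ω => Filter.liminf (fun n => K * ∏ i ∈ Finset.range n, H (i + g) ω) Filter.atTop with hf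
  have hfnmeas : ∀ n, Measurable fun ω => K * ∏ i ∈ Finset.range n, H (i + g) ω := fun n =>
    (Finset.measurable_prod _ (fun i _ => hHmeas _)).const_mul K
  have hfmeas : Measurable f := Measurable.liminf hfnmeas
  -- pointwise: on the event, 1 ≤ f
  have hE : {ω | (∑ i : Fin g, ∑ j : Fin g, G i j * t i.1 ω * t j.1 ω) < a ∧
      u < ∑' i, lam i * t i ω ^ 2} ⊆ {ω | 1 ≤ f ω} := by
    intro ω hω
    obtain ⟨hA, hu'⟩ := hω
    have hSummable : Summable fun i => lam i * t i ω ^ 2 := by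
      by_contra h
      rw [tsum_eq_zero_of_not_summable h] at hu'
      linarith
    have hTailSum : Summable fun i => lam (i + g) * t (i + g) ω ^ 2 :=
      (summable_nat_add_iff (f := fun i => lam i * t i ω ^ 2) g).2 hSummable
    set T : ℝ := ∑' i, lam (i + g) * t (i + g) ω ^ 2 with hT
    have hsplit : (∑ i ∈ Finset.range g, lam i * t i ω ^ 2) + T = ∑' i, lam i * t i ω ^ 2 := by
      rw [hT]; exact Summable.sum_add_tsum_nat_add g hSummable
    clear_value T
    -- bound on head sum
    have hS1 : ∑ i ∈ Finset.range g, lam i * t i ω ^ 2 ≤ lamp * (a / μt) := by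
      have h1 : ∑ i ∈ Finset.range g, lam i * t i ω ^ 2
          = lamp * ∑ i ∈ Finset.range g, t i ω ^ 2 := by
        rw [Finset.mul_sum]
        exact Finset.sum_congr rfl fun i hi => by
          rw [hfirst i (Finset.mem_range.1 hi)]
      have h2 := hμmin (fun i : Fin g => t i.1 ω)
      rw [Fin.sum_univ_eq_sum_range (fun i => t i ω ^ 2) g] at h2
      have h3 : μt * ∑ i ∈ Finset.range g, t i ω ^ 2 < a := lt_of_le_of_lt h2 hA
      have h4 : ∑ i ∈ Finset.range g, t i ω ^ 2 ≤ a / μt := by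
        rw [le_div_iff₀ hμt]; linarith [h3]
      rw [h1]
      exact mul_le_mul_of_nonneg_left h4 hlamppos.le
    -- limit of the partial products at ω
    have hprodω : ∀ n, ∏ i ∈ Finset.range n, H (i + g) ω
        = ENNReal.ofReal (Real.exp (θ * ∑ i ∈ Finset.range n, lam (i + g) * t (i + g) ω ^ 2)) := by
      intro n
      rw [Finset.mul_sum, Real.exp_sum, ENNReal.ofReal_prod_of_nonneg
        (fun i _ => (Real.exp_pos _).le)]
      exact Finset.prod_congr rfl fun i _ => by rw [hHdef]; ring_nf
    have htend : Filter.Tendsto (fun n => K * ∏ i ∈ Finset.range n, H (i + g) ω)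
        Filter.atTop (nhds (K * ENNReal.ofReal (Real.exp (θ * T)))) := by
      have h1 : Filter.Tendsto (fun n => ∑ i ∈ Finset.range n, lam (i + g) * t (i + g) ω ^ 2)
          Filter.atTop (nhds T) := by rw [hT]; exact hTailSum.hasSum.tendsto_sum_nat
      have h2 : Filter.Tendsto
          (fun n => ENNReal.ofReal (Real.exp (θ * ∑ i ∈ Finset.range n, lam (i + g) * t (i + g) ω ^ 2)))
          Filter.atTop (nhds (ENNReal.ofReal (Real.exp (θ * T)))) :=
        (ENNReal.continuous_ofReal.tendsto _).comp
          ((Real.continuous_exp.tendsto _).comp (h1.const_mul θ))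
      simp_rw [hprodω]
      exact ENNReal.Tendsto.const_mul h2 (Or.inr hKne)
    have hfeq : f ω = K * ENNReal.ofReal (Real.exp (θ * T)) := htend.liminf_eq
    rw [Set.mem_setOf_eq, hfeq, hK, ← ENNReal.ofReal_mul (by positivity), ← Real.exp_add,
      ← Real.exp_add]
    rw [ENNReal.one_le_ofReal]
    have hA'ge : θ * (∑ i ∈ Finset.range g, lam i * t i ω ^ 2) ≤ A' := by
      have : θ * (lamp * (a / μt)) = A' := by
        rw [hθ, hθ', hA']; field_simp
      calc θ * (∑ i ∈ Finset.range g, lam i * t i ω ^ 2) ≤ θ * (lamp * (a / μt)) :=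
            mul_le_mul_of_nonneg_left hS1 hθpos.le
        _ = A' := this
    have huS : θ * u < θ * ((∑ i ∈ Finset.range g, lam i * t i ω ^ 2) + T) := by
      apply mul_lt_mul_of_pos_left _ hθpos
      rw [hsplit]; exact hu'
    have hθu : -θ' * u / 4 = -(θ * u) := by rw [hθ]; ring
    have : 0 ≤ A' + -θ' * u / 4 + θ * T := by
      rw [hθu, mul_add] at *
      linarith
    calc (1:ℝ) = Real.exp 0 := Real.exp_zero.symm
      _ ≤ Real.exp (A' + -θ' * u / 4 + θ * T) := Real.exp_le_exp.2 this
  -- main chain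
  calc P {ω | (∑ i : Fin g, ∑ j : Fin g, G i j * t i.1 ω * t j.1 ω) < a ∧
          u < ∑' i, lam i * t i ω ^ 2}
      ≤ P {ω | 1 ≤ f ω} := measure_mono hE
    _ = 1 * P {ω | 1 ≤ f ω} := (one_mul _).symm
    _ ≤ ∫⁻ ω, f ω ∂P := mul_meas_ge_le_lintegral₀ hfmeas.aemeasurable 1
    _ ≤ Filter.liminf (fun n => ∫⁻ ω, K * ∏ i ∈ Finset.range n, H (i + g) ω ∂P) Filter.atTop :=
        lintegral_liminf_le hfnmeas
    _ = K * ENNReal.ofReal L := by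
        have heq : ∀ n, ∫⁻ ω, K * ∏ i ∈ Finset.range n, H (i + g) ω ∂P
            = K * ENNReal.ofReal (∏ i ∈ Finset.range n, (1 - θ' * lam (i + g) / 2) ^ (-(1/2) : ℝ)) := by
          intro n
          rw [lintegral_const_mul K (Finset.measurable_prod _ (fun i _ => hHmeas _)), hprod_int n,
            ENNReal.ofReal_prod_of_nonneg (fun i _ => Real.rpow_nonneg (hrpos i).le _)]
        simp_rw [heq]
        have h1 : Filter.Tendsto
            (fun n => ∏ i ∈ Finset.range n, (1 - θ' * lam (i + g) / 2) ^ (-(1/2) : ℝ))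
            Filter.atTop (nhds L) := hHasProd.tendsto_prod_nat
        exact Filter.Tendsto.liminf_eq
          (ENNReal.Tendsto.const_mul ((ENNReal.continuous_ofReal.tendsto _).comp h1) (Or.inr hKne))
    _ = ENNReal.ofReal ((Real.exp A' * L) * Real.exp (-θ' * u / 4)) := by
        rw [hK, ← ENNReal.ofReal_mul (by positivity)]
        congr 1
        ring
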